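/- Let A be an n×n complex matrix, r ≥ 1 an integer, and Z = diag(z₁,…,z_n) the diagonal matrix of indeterminates. Then det_r(Z + A) = Σ_{S ⊆ {1,…,n}} r^{|S|} · (∏_{i∈S} z_i) · det_r(A(S^c)), as an identity in ℂ[z₁,…,z_n], where S^c = {1,…,n} \ S. -/

import Mathlib

open Polynomial Matrix

/-- The number of cycles of a permutation, counting fixed points as cycles. -/
def cycleCount {ι : Type*} [Fintype ι] [DecidableEq ι] (σ : Equiv.Perm ι) : ℕ :=
  σ.cycleType.card + (Fintype.card ι - σ.support.card)

/-- The `r`-determinant `det_r(M) = Σ_σ sgn(σ) r^{c(σ)} Π_i M_{i σ(i)}`. -/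
noncomputable def detr {ι : Type*} [Fintype ι] [DecidableEq ι] {R : Type*} [CommRing R]
    (r : ℕ) (M : Matrix ι ι R) : R :=
  ∑ σ : Equiv.Perm ι, ((Equiv.Perm.sign σ : ℤ) : R) * (r : R) ^ cycleCount σ * ∏ i, M i (σ i)

/-- The matrix `Z + A`, where `Z = diag(z₁,…,z_n)` is the diagonal matrix of indeterminates. -/
noncomputable def ZaddA {n : ℕ} (A : Matrix (Fin n) (Fin n) ℂ) :
    Matrix (Fin n) (Fin n) (MvPolynomial (Fin n) ℂ) :=
  Matrix.of fun i j => (if i = j then MvPolynomial.X i else 0) + MvPolynomial.C (A i j)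

/-- The principal submatrix of `A` with rows and columns indexed by `T`. -/
def psub {n : ℕ} (A : Matrix (Fin n) (Fin n) ℂ) (T : Finset (Fin n)) :
    Matrix ↥T ↥T ℂ :=
  A.submatrix (fun x : ↥T => (x : Fin n)) (fun x : ↥T => (x : Fin n))

private lemma prod_ite_fixed {n : ℕ} (σ : Equiv.Perm (Fin n)) (S : Finset (Fin n)) :
    (∏ i ∈ S, if i = σ i then (MvPolynomial.X i : MvPolynomial (Fin n) ℂ) else 0)
      = if ∀ i ∈ S, σ i = i then ∏ i ∈ S, (MvPolynomial.X i : MvPolynomial (Fin n) ℂ)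
        else 0 := by
  split_ifs with h
  · exact Finset.prod_congr rfl fun i hi => if_pos (h i hi).symm
  · push_neg at h
    obtain ⟨i, hi, hne⟩ := h
    exact Finset.prod_eq_zero hi (if_neg fun e => hne e.symm)

private lemma mem_compl_iff_of_fixed {n : ℕ} {S : Finset (Fin n)} {σ : Equiv.Perm (Fin n)}
    (hσ : ∀ i ∈ S, σ i = i) : ∀ x, x ∈ Sᶜ ↔ σ x ∈ Sᶜ := by
  intro x
  simp only [Finset.mem_compl]
  constructor
  · intro hx hsx
    have h1 : σ (σ x) = σ x := hσ _ hsx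
    have h2 : σ x = x := σ.injective h1
    rw [h2] at hsx
    exact hx hsx
  · intro h hx
    rw [hσ x hx] at h
    exact h hx

private lemma cycleCount_ofSubtype {n : ℕ} (S : Finset (Fin n)) (τ : Equiv.Perm ↥(Sᶜ)) :
    cycleCount (Equiv.Perm.ofSubtype τ) = S.card + cycleCount τ := by
  have h1 : Fintype.card ↥(Sᶜ) = n - S.card := by
    rw [Fintype.card_coe, Finset.card_compl, Fintype.card_fin]
  have h2 : τ.support.card ≤ Fintype.card ↥(Sᶜ) := Finset.card_le_univ _
  have h3 : S.card ≤ n := by simpa using Finset.card_le_univ S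
  rw [h1] at h2
  have hc : (Equiv.Perm.ofSubtype τ).cycleType = τ.cycleType := by
    convert Equiv.Perm.cycleType_ofSubtype using 2
  have hs : (Equiv.Perm.ofSubtype τ).support.card = τ.support.card := by
    rw [Equiv.Perm.support_ofSubtype]
    rw [Finset.card_map]
    congr!
  unfold cycleCount
  rw [hc, hs, h1, Fintype.card_fin]
  omega

/-- `det_r(Z + A) = Σ_{S ⊆ [n]} r^{|S|} (Π_{i∈S} zᵢ) det_r(A(Sᶜ))`. -/
theorem detr_expansion {n : ℕ} (r : ℕ) (hr : 1 ≤ r) (A : Matrix (Fin n) (Fin n) ℂ) :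
    detr r (ZaddA A)
      = ∑ S : Finset (Fin n),
          (r : MvPolynomial (Fin n) ℂ) ^ S.card * (∏ i ∈ S, MvPolynomial.X i) *
            MvPolynomial.C (detr r (psub A Sᶜ)) := by
  rw [detr]
  have key : ∀ σ : Equiv.Perm (Fin n),
      (∏ i, ZaddA A i (σ i))
        = ∑ S : Finset (Fin n), if ∀ i ∈ S, σ i = i then
            (∏ i ∈ S, MvPolynomial.X i) * ∏ i ∈ Sᶜ, MvPolynomial.C (A i (σ i)) else 0 := by
    intro σ
    simp only [ZaddA, Matrix.of_apply]
    rw [Finset.prod_add, Finset.powerset_univ]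
    refine Finset.sum_congr rfl fun S _ => ?_
    rw [← Finset.compl_eq_univ_sdiff, prod_ite_fixed, ite_mul, zero_mul]
  simp_rw [key, Finset.mul_sum]
  rw [Finset.sum_comm]
  refine Finset.sum_congr rfl fun S _ => ?_
  simp_rw [mul_ite, mul_zero]
  rw [← Finset.sum_filter]
  rw [detr, map_sum, Finset.mul_sum]
  refine (Finset.sum_bij' (fun τ _ => Equiv.Perm.ofSubtype τ)
    (fun σ hσ => σ.subtypePerm (fun x => (mem_compl_iff_of_fixed (Finset.mem_filter.mp hσ).2 x).symm))
    ?_ ?_ ?_ ?_ ?_).symm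
  · intro τ _
    rw [Finset.mem_filter]
    refine ⟨Finset.mem_univ _, fun i hi => ?_⟩
    exact Equiv.Perm.ofSubtype_apply_of_not_mem τ (by simpa using hi)
  · intro σ hσ
    exact Finset.mem_univ _
  · intro τ _
    exact Equiv.Perm.subtypePerm_ofSubtype τ
  · intro σ hσ
    exact Equiv.Perm.ofSubtype_subtypePerm _ fun x hx =>
      Finset.mem_compl.mpr fun hxS => hx ((Finset.mem_filter.mp hσ).2 x hxS)
  · intro τ _
    have hprod : (∏ i ∈ Sᶜ, MvPolynomial.C (A i (Equiv.Perm.ofSubtype τ i))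
          : MvPolynomial (Fin n) ℂ)
        = MvPolynomial.C (∏ x : ↥(Sᶜ), psub A Sᶜ x (τ x)) := by
      rw [← map_prod]
      congr 1
      rw [Finset.prod_subtype Sᶜ (fun x => Iff.rfl)
        (fun i => A i (Equiv.Perm.ofSubtype τ i))]
      refine Finset.prod_congr rfl fun x _ => ?_
      rw [Equiv.Perm.ofSubtype_apply_of_mem τ x.2]
      rfl
    rw [Equiv.Perm.sign_ofSubtype, cycleCount_ofSubtype, pow_add, hprod,
      _root_.map_mul, _root_.map_mul, map_intCast, _root_.map_pow, map_natCast]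
    ring_nf
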